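/- The linear map φ from the complex monoid algebra ℂPT_n to the convolution algebra A_n determined on basis elements by φ(s) = ∑_{t ≤ s} e_t (sum over all t ∈ PT_n with t ≤ s) is an isomorphism of unital ℂ-algebras, and its inverse is the linear map ψ determined by ψ(e_s) = ∑_{t ≤ s} μ(t,s)·t, where μ is the Möbius function of the poset (PT_n, ≤). -/

import Mathlib

/-- The monoid of partial functions on `{1,…,n}`, modeled as `Fin n → Option (Fin n)`,
under composition of partial functions (right to left). -/
abbrev PT (n : ℕ) := Fin n → Option (Fin n)

namespace PT

variable {n : ℕ}

/-- Composition of partial functions, right to left: `comp s t = s ∘ t`. -/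
def comp (s t : PT n) : PT n := fun x => (t x).bind s

/-- The domain of a partial function. -/
def dom (t : PT n) : Finset (Fin n) := Finset.univ.filter fun x => (t x).isSome

/-- The image (range) of a partial function. -/
def ran (t : PT n) : Finset (Fin n) := Finset.univ.filter fun y => ∃ x, t x = some y

/-- The identity partial function on the subset `X`. -/
def idOn (X : Finset (Fin n)) : PT n := fun x => if x ∈ X then some x else none

instance : Monoid (PT n) where
  mul := comp
  one := fun x => some x
  mul_assoc s t w := by
    funext x
    show (w x).bind (fun z => (t z).bind s) = ((w x).bind t).bind s
    exact (Option.bind_assoc (w x) t s).symm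
  one_mul t := by
    funext x
    show (t x).bind (fun y => some y) = t x
    cases t x <;> rfl
  mul_one t := by
    funext x
    show (some x).bind t = t x
    rfl

end PT

namespace PT

variable {n : ℕ}

/-- The natural partial order on partial functions: containment of graphs
(`s ≤ t` iff `dom s ⊆ dom t` and `t x = s x` for `x ∈ dom s`). -/
instance : PartialOrder (PT n) where
  le s t := ∀ x, s x ≠ none → s x = t x
  le_refl s := by intro x _; rfl
  le_trans s t u hst htu := by
    intro x hx
    rw [hst x hx]
    exact htu x (by rw [← hst x hx]; exact hx)
  le_antisymm s t hst hts := by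
    funext x
    by_cases hs : s x = none
    · by_cases ht : t x = none
      · rw [hs, ht]
      · rw [hts x ht] at ht; exact absurd hs ht
    · exact hst x hs

/-- Core Lean now has an `LE (Option α)` instance, so the pointwise order on
`Fin n → Option (Fin n)` would otherwise be picked for `≤`; this keeps `≤` the
natural partial order above, as in the original. -/
instance : LE (PT n) := Preorder.toLE

instance : DecidableRel (α := PT n) (· ≤ ·) := fun s t =>
  inferInstanceAs (Decidable (∀ x, s x ≠ none → s x = t x))

instance : DecidableRel (α := PT n) (· < ·) := fun s t =>
  decidable_of_iff (s ≤ t ∧ ¬ t ≤ s) lt_iff_le_not_ge.symm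

end PT

/-- The convolution algebra `A_n` of the epimorphism category: the vector space with basis
`{e_t : t ∈ PT_n}` and multiplication `e_s · e_t = e_{s ∘ t}` if `dom s = im t`, else `0`. -/
noncomputable def PTAlg (n : ℕ) : Type := PT n →₀ ℂ

namespace PTAlg

variable {n : ℕ}

noncomputable instance : AddCommGroup (PTAlg n) := inferInstanceAs (AddCommGroup (PT n →₀ ℂ))
noncomputable instance : Module ℂ (PTAlg n) := inferInstanceAs (Module ℂ (PT n →₀ ℂ))

/-- The coefficient of `t` in an element of `A_n`. -/
noncomputable def coeff (a : PTAlg n) : PT n → ℂ := fun t => (show PT n →₀ ℂ from a) t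

/-- The basis element `e_t` of `A_n`. -/
noncomputable def e (t : PT n) : PTAlg n := show PT n →₀ ℂ from Finsupp.single t 1

/-- Convolution: `e_s · e_t = e_{s ∘ t}` if `dom s = im t`, and `0` otherwise. -/
noncomputable instance : Mul (PTAlg n) :=
  ⟨fun a b =>
    show PT n →₀ ℂ from
      Finsupp.equivFunOnFinite.symm fun u =>
        ∑ p : PT n × PT n,
          if PT.dom p.1 = PT.ran p.2 ∧ PT.comp p.1 p.2 = u then coeff a p.1 * coeff b p.2
          else 0⟩

/-- The multiplicative unit of `A_n` is `∑_{X ⊆ {1,…,n}} e_{id_X}`. -/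
noncomputable instance : One (PTAlg n) := ⟨∑ X : Finset (Fin n), e (PT.idOn X)⟩

end PTAlg
namespace PT

variable {n : ℕ}

lemma le_iff {s t : PT n} : s ≤ t ↔ ∀ x, s x ≠ none → s x = t x := Iff.rfl

lemma mem_dom {t : PT n} {x : Fin n} : x ∈ dom t ↔ t x ≠ none := by
  simp [dom, Option.isSome_iff_ne_none]

lemma mem_ran {t : PT n} {y : Fin n} : y ∈ ran t ↔ ∃ x, t x = some y := by
  simp [ran]

lemma comp_apply (s t : PT n) (x : Fin n) : comp s t x = (t x).bind s := rfl

/-- Restriction of a partial function to a finite set. -/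
def restrict (s : PT n) (X : Finset (Fin n)) : PT n := fun x => if x ∈ X then s x else none

lemma restrict_le (s : PT n) (X : Finset (Fin n)) : restrict s X ≤ s := by
  intro x hx
  by_cases h : x ∈ X
  · simp [restrict, h]
  · simp [restrict, h] at hx

lemma comp_le_comp {a s b t : PT n} (ha : a ≤ s) (hb : b ≤ t) : comp a b ≤ comp s t := by
  intro x hx
  show (b x).bind a = (t x).bind s
  rw [comp_apply] at hx
  cases hbx : b x with
  | none => rw [hbx] at hx; exact absurd rfl hx
  | some y =>
    rw [hbx, Option.bind_some] at hx
    have htx : t x = some y := by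
      rw [← hb x (by rw [hbx]; exact Option.some_ne_none y), hbx]
    rw [htx, Option.bind_some, Option.bind_some]
    exact ha y hx

lemma decomp {s t u : PT n} (h : u ≤ comp s t) :
    restrict s (ran (restrict t (dom u))) ≤ s ∧ restrict t (dom u) ≤ t ∧
    dom (restrict s (ran (restrict t (dom u)))) = ran (restrict t (dom u)) ∧
    comp (restrict s (ran (restrict t (dom u)))) (restrict t (dom u)) = u := by
  set b := restrict t (dom u) with hbdef
  set a := restrict s (ran b) with hadef
  have hranb : ∀ y, y ∈ ran b → s y ≠ none := by
    intro y hy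
    rw [mem_ran] at hy
    obtain ⟨x, hx⟩ := hy
    have hxd : x ∈ dom u := by
      by_contra hxd
      simp [hbdef, restrict, hxd] at hx
    have hux : u x ≠ none := mem_dom.mp hxd
    have htx : t x = some y := by
      rw [hbdef] at hx; simpa [restrict, hxd] using hx
    have := h x hux
    rw [comp_apply, htx, Option.bind_some] at this
    rw [← this]; exact hux
  refine ⟨restrict_le _ _, restrict_le _ _, ?_, ?_⟩
  · ext y
    rw [mem_dom]
    constructor
    · intro hy
      by_contra hyr
      simp [hadef, restrict, hyr] at hy
    · intro hy
      rw [hadef]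
      simp only [restrict, hy, if_true]
      exact hranb y hy
  · funext x
    by_cases hxd : x ∈ dom u
    · have hux : u x ≠ none := mem_dom.mp hxd
      have hcx := h x hux
      rw [comp_apply] at hcx
      obtain ⟨y, hty⟩ : ∃ y, t x = some y := by
        cases htx : t x with
        | none => rw [htx, Option.bind_none] at hcx; exact absurd hcx hux
        | some y => exact ⟨y, rfl⟩
      have hbx : b x = some y := by rw [hbdef]; simp [restrict, hxd, hty]
      have hyr : y ∈ ran b := mem_ran.mpr ⟨x, hbx⟩
      rw [comp_apply, hbx, Option.bind_some, hadef]
      simp only [restrict, hyr, if_true]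
      rw [hty, Option.bind_some] at hcx
      exact hcx.symm
    · have hux : u x = none := by
        by_contra hux; exact hxd (mem_dom.mpr hux)
      have hbx : b x = none := by rw [hbdef]; simp [restrict, hxd]
      rw [comp_apply, hbx, Option.bind_none, hux]

lemma decomp_unique {s t a b : PT n} (ha : a ≤ s) (hb : b ≤ t) (hd : dom a = ran b) :
    restrict t (dom (comp a b)) = b ∧ restrict s (ran b) = a := by
  have hdom : dom (comp a b) = dom b := by
    ext x
    rw [mem_dom, mem_dom, comp_apply]
    cases hbx : b x with
    | none => simp
    | some y =>
      have hyr : y ∈ ran b := mem_ran.mpr ⟨x, hbx⟩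
      rw [← hd, mem_dom] at hyr
      simp [Option.bind_some, hyr]
  have hbeq : restrict t (dom (comp a b)) = b := by
    rw [hdom]
    funext x
    by_cases hx : x ∈ dom b
    · simp only [restrict, hx, if_true]
      exact (hb x (mem_dom.mp hx)).symm
    · have : b x = none := by by_contra h; exact hx (mem_dom.mpr h)
      simp [restrict, hx, this]
  refine ⟨hbeq, ?_⟩
  funext y
  by_cases hy : y ∈ ran b
  · simp only [restrict, hy, if_true]
    rw [← hd, mem_dom] at hy
    exact (ha y hy).symm
  · have hay : a y = none := by
      have := hy; rw [← hd, mem_dom, not_not] at this; exact this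
    simp [restrict, hy, hay]

end PT
namespace PTAlg

variable {n : ℕ}

lemma ext' {a b : PTAlg n} (h : ∀ u, coeff a u = coeff b u) : a = b :=
  Finsupp.ext h

lemma coeff_add (a b : PTAlg n) (u : PT n) : coeff (a + b) u = coeff a u + coeff b u := rfl

lemma coeff_smul (c : ℂ) (a : PTAlg n) (u : PT n) : coeff (c • a) u = c * coeff a u := rfl

lemma coeff_zero (u : PT n) : coeff (0 : PTAlg n) u = 0 := rfl

lemma coeff_sum {ι : Type*} (s : Finset ι) (f : ι → PTAlg n) (u : PT n) :
    coeff (∑ i ∈ s, f i) u = ∑ i ∈ s, coeff (f i) u := by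
  classical
  induction s using Finset.induction with
  | empty => simp [coeff_zero]
  | insert _ _ hx => rw [Finset.sum_insert hx, Finset.sum_insert hx, coeff_add]; simp [*]

lemma coeff_e (s u : PT n) : coeff (e s) u = if s = u then 1 else 0 :=
  Finsupp.single_apply

lemma coeff_mul (a b : PTAlg n) (u : PT n) :
    coeff (a * b) u = ∑ p : PT n × PT n,
      if PT.dom p.1 = PT.ran p.2 ∧ PT.comp p.1 p.2 = u then coeff a p.1 * coeff b p.2
      else 0 := rfl

lemma e_mul_e (s t : PT n) :
    e s * e t = if PT.dom s = PT.ran t then e (PT.comp s t) else 0 := by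
  apply ext'
  intro u
  rw [coeff_mul]
  rw [Fintype.sum_eq_single (s, t)]
  · simp only [coeff_e, if_pos rfl]
    by_cases h1 : PT.dom s = PT.ran t
    · rw [if_pos h1, coeff_e]
      by_cases h2 : PT.comp s t = u
      · rw [if_pos ⟨h1, h2⟩, if_pos h2]; norm_num
      · rw [if_neg (by tauto), if_neg h2]
    · rw [if_neg h1, if_neg (by tauto), coeff_zero]
  · intro p hp
    by_cases h1 : p.1 = s
    · have h2 : p.2 ≠ t := fun h2 => hp (Prod.ext h1 h2)
      simp [coeff_e, h1, Ne.symm h2]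
    · simp [coeff_e, Ne.symm h1]

/-- Multiplication as a bilinear map. -/
noncomputable def mulL : PTAlg n →ₗ[ℂ] PTAlg n →ₗ[ℂ] PTAlg n where
  toFun a :=
    { toFun := fun b => a * b
      map_add' := fun b b' => by
        apply ext'; intro u
        rw [coeff_add, coeff_mul, coeff_mul, coeff_mul, ← Finset.sum_add_distrib]
        apply Finset.sum_congr rfl
        intro p _
        rw [coeff_add]
        split_ifs <;> ring
      map_smul' := fun c b => by
        apply ext'; intro u
        rw [RingHom.id_apply, coeff_smul, coeff_mul, coeff_mul, Finset.mul_sum]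
        apply Finset.sum_congr rfl
        intro p _
        rw [coeff_smul]
        split_ifs <;> ring }
  map_add' a a' := by
    apply LinearMap.ext; intro b
    apply ext'; intro u
    show coeff ((a + a') * b) u = coeff (a * b + a' * b) u
    rw [coeff_add, coeff_mul, coeff_mul, coeff_mul, ← Finset.sum_add_distrib]
    apply Finset.sum_congr rfl
    intro p _
    rw [coeff_add]
    split_ifs <;> ring
  map_smul' c a := by
    apply LinearMap.ext; intro b
    apply ext'; intro u
    show coeff ((c • a) * b) u = coeff (c • (a * b)) u
    rw [coeff_smul, coeff_mul, coeff_mul, Finset.mul_sum]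
    apply Finset.sum_congr rfl
    intro p _
    rw [coeff_smul]
    split_ifs <;> ring

lemma mulL_apply (a b : PTAlg n) : mulL a b = a * b := rfl

open PT in
/-- The key structural identity: products of the `φ`-images of basis vectors. -/
lemma sum_e_mul_sum_e (s t : PT n) :
    mulL (∑ a ∈ Finset.univ.filter (· ≤ s), e a) (∑ b ∈ Finset.univ.filter (· ≤ t), e b)
      = ∑ u ∈ Finset.univ.filter (· ≤ PT.comp s t), e u := by
  classical
  rw [map_sum]
  simp only [map_sum, LinearMap.sum_apply, mulL_apply, e_mul_e]
  rw [← Finset.sum_product']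
  rw [← Finset.sum_filter]
  refine Finset.sum_nbij' (fun p => PT.comp p.2 p.1)
    (fun u => (restrict t (dom u), restrict s (ran (restrict t (dom u))))) ?_ ?_ ?_ ?_ ?_
  · intro p hp
    simp only [Finset.mem_filter, Finset.mem_product, Finset.mem_univ, true_and] at hp ⊢
    exact comp_le_comp hp.1.2 hp.1.1
  · intro u hu
    simp only [Finset.mem_filter, Finset.mem_univ, true_and] at hu
    obtain ⟨h1, h2, h3, _⟩ := decomp hu
    simp only [Finset.mem_filter, Finset.mem_product, Finset.mem_univ, true_and]
    exact ⟨⟨h2, h1⟩, h3⟩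
  · intro p hp
    simp only [Finset.mem_filter, Finset.mem_product, Finset.mem_univ, true_and] at hp
    obtain ⟨hb, ha⟩ := decomp_unique hp.1.2 hp.1.1 hp.2
    have hfst : restrict t (dom (PT.comp p.2 p.1)) = p.1 := hb
    ext1
    · exact hfst
    · show restrict s (ran (restrict t (dom (PT.comp p.2 p.1)))) = p.2
      rw [hfst]; exact ha
  · intro u hu
    simp only [Finset.mem_filter, Finset.mem_univ, true_and] at hu
    exact (decomp hu).2.2.2
  · intro p _
    rfl

end PTAlg
namespace PTAlg

variable {n : ℕ}

lemma one_def : (1 : PTAlg n) = ∑ X : Finset (Fin n), e (PT.idOn X) := rfl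

open PT in
lemma sum_e_le_one : (∑ t ∈ Finset.univ.filter (· ≤ (1 : PT n)), e t) = (1 : PTAlg n) := by
  rw [one_def]
  refine Finset.sum_nbij' (fun t => dom t) (fun X => idOn X) ?_ ?_ ?_ ?_ ?_
  · intro t _; exact Finset.mem_univ _
  · intro X _
    simp only [Finset.mem_filter, Finset.mem_univ, true_and]
    intro x hx
    by_cases h : x ∈ X
    · simp only [idOn, h, if_true]; rfl
    · simp [idOn, h] at hx
  · intro t ht
    simp only [Finset.mem_filter, Finset.mem_univ, true_and] at ht
    funext x
    by_cases h : t x = none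
    · have : x ∉ dom t := by rw [mem_dom, not_not]; exact h
      simp [idOn, this, h]
    · have hx : x ∈ dom t := mem_dom.mpr h
      have := ht x h
      simp only [idOn, hx, if_true]
      exact this.symm
  · intro X _
    ext x
    rw [mem_dom]
    by_cases h : x ∈ X <;> simp [idOn, h]
  · intro t ht
    simp only [Finset.mem_filter, Finset.mem_univ, true_and] at ht
    congr 1
    funext x
    by_cases h : t x = none
    · have : x ∉ dom t := by rw [mem_dom, not_not]; exact h
      simp [idOn, this, h]
    · have hx : x ∈ dom t := mem_dom.mpr h
      have := ht x h
      simp only [idOn, hx, if_true]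
      exact this

lemma mobius_sum {μ : PT n → PT n → ℂ} (hrefl : ∀ x, μ x x = 1)
    (hrec : ∀ x y, x < y →
      μ x y = -∑ z ∈ Finset.univ.filter (fun z => x ≤ z ∧ z < y), μ x z)
    (u s : PT n) :
    ∑ t ∈ Finset.univ.filter (fun t => u ≤ t ∧ t ≤ s), μ u t = if u = s then 1 else 0 := by
  by_cases hus : u = s
  · subst hus
    rw [if_pos rfl]
    have hset : Finset.univ.filter (fun t => u ≤ t ∧ t ≤ u) = {u} := by
      ext t
      simp only [Finset.mem_filter, Finset.mem_univ, true_and, Finset.mem_singleton]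
      constructor
      · rintro ⟨h1, h2⟩; exact (le_antisymm h1 h2).symm
      · rintro rfl; exact ⟨le_refl _, le_refl _⟩
    rw [hset, Finset.sum_singleton, hrefl]
  · rw [if_neg hus]
    by_cases hle : u ≤ s
    · have hlt : u < s := lt_of_le_of_ne hle hus
      have hsplit : Finset.univ.filter (fun t => u ≤ t ∧ t ≤ s)
          = insert s (Finset.univ.filter (fun t => u ≤ t ∧ t < s)) := by
        ext t
        simp only [Finset.mem_insert, Finset.mem_filter, Finset.mem_univ, true_and]
        constructor
        · rintro ⟨h1, h2⟩
          rcases eq_or_lt_of_le h2 with h | h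
          · exact Or.inl h
          · exact Or.inr ⟨h1, h⟩
        · rintro (rfl | ⟨h1, h2⟩)
          · exact ⟨hle, le_refl _⟩
          · exact ⟨h1, le_of_lt h2⟩
      have hnot : s ∉ Finset.univ.filter (fun t => u ≤ t ∧ t < s) := by simp
      rw [hsplit, Finset.sum_insert hnot, hrec u s hlt]
      ring
    · have hset : Finset.univ.filter (fun t => u ≤ t ∧ t ≤ s) = ∅ := by
        ext t
        simp only [Finset.mem_filter, Finset.mem_univ, true_and, Finset.notMem_empty,
          iff_false]
        rintro ⟨h1, h2⟩; exact hle (h1.trans h2)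
      rw [hset, Finset.sum_empty]

end PTAlg

open PT PTAlg in
/-- The linear map `φ : ℂPT_n → A_n` determined by
`φ(s) = ∑_{t ≤ s} e_t` is an isomorphism of unital `ℂ`-algebras (it is bijective,
multiplicative and unital), and its inverse is the linear map `ψ` determined by
`ψ(e_s) = ∑_{t ≤ s} μ(t,s)·t`, where `μ` is the Möbius function of the poset
`(PT_n, ≤)`. -/
theorem monoidAlgebra_PT_iso_convolutionAlgebra (n : ℕ)
    (φ : MonoidAlgebra ℂ (PT n) →ₗ[ℂ] PTAlg n)
    (hφ : ∀ s : PT n,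
      φ (MonoidAlgebra.single s 1) = ∑ t ∈ Finset.univ.filter (· ≤ s), e t)
    (μ : PT n → PT n → ℂ)
    (hμ_refl : ∀ x : PT n, μ x x = 1)
    (hμ_rec : ∀ x y : PT n, x < y →
      μ x y = -∑ z ∈ Finset.univ.filter (fun z => x ≤ z ∧ z < y), μ x z)
    (ψ : PTAlg n →ₗ[ℂ] MonoidAlgebra ℂ (PT n))
    (hψ : ∀ s : PT n,
      ψ (e s) = ∑ t ∈ Finset.univ.filter (· ≤ s), μ t s • MonoidAlgebra.single t 1) :
    Function.Bijective φ ∧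
    (∀ a b : MonoidAlgebra ℂ (PT n), φ (a * b) = φ a * φ b) ∧
    φ 1 = 1 ∧
    (∀ x : MonoidAlgebra ℂ (PT n), ψ (φ x) = x) ∧
    (∀ y : PTAlg n, φ (ψ y) = y) := by
  classical
  -- ψ ∘ φ is the identity on basis vectors
  have hψφ_single : ∀ s : PT n,
      ψ (φ (MonoidAlgebra.single s 1)) = MonoidAlgebra.single s 1 := by
    intro s
    rw [hφ s, map_sum]
    simp only [hψ]
    have step1 : ∀ t : PT n,
        (∑ u ∈ Finset.univ.filter (· ≤ t), μ u t • (MonoidAlgebra.single u 1 : MonoidAlgebra ℂ (PT n)))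
          = ∑ u : PT n, if u ≤ t then μ u t • (MonoidAlgebra.single u 1 : MonoidAlgebra ℂ (PT n)) else 0 :=
      fun t => Finset.sum_filter _ _
    simp only [step1]
    rw [Finset.sum_filter]
    have step2 : ∀ t : PT n,
        (if t ≤ s then ∑ u : PT n, if u ≤ t then μ u t • (MonoidAlgebra.single u 1 : MonoidAlgebra ℂ (PT n)) else 0
          else 0)
          = ∑ u : PT n, if u ≤ t ∧ t ≤ s then μ u t • (MonoidAlgebra.single u 1 : MonoidAlgebra ℂ (PT n)) else 0 := by
      intro t
      split_ifs with h
      · exact Finset.sum_congr rfl fun u _ => by simp [h]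
      · symm
        apply Finset.sum_eq_zero
        intro u _
        rw [if_neg (by tauto)]
    simp only [step2]
    rw [Finset.sum_comm]
    have step3 : ∀ u : PT n,
        (∑ t : PT n, if u ≤ t ∧ t ≤ s then μ u t • (MonoidAlgebra.single u 1 : MonoidAlgebra ℂ (PT n)) else 0)
          = (if u = s then (1 : ℂ) else 0) •
              (MonoidAlgebra.single u 1 : MonoidAlgebra ℂ (PT n)) := by
      intro u
      rw [← Finset.sum_filter, ← PTAlg.mobius_sum hμ_refl hμ_rec u s, Finset.sum_smul]
    simp only [step3, ite_smul, one_smul, zero_smul]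
    simp [Finset.sum_ite_eq']
  have hψφ : ∀ x : MonoidAlgebra ℂ (PT n), ψ (φ x) = x := by
    intro x
    induction x using MonoidAlgebra.induction_on with
    | of s => exact hψφ_single s
    | add a b ha hb => rw [map_add, map_add, ha, hb]
    | smul c a ha => rw [map_smul, map_smul, ha]
  -- surjectivity of φ
  have hrange : ∀ s : PT n, e s ∈ LinearMap.range φ := by
    intro s
    induction s using WellFoundedLT.induction with
    | ind s ih =>
      have hsplit : Finset.univ.filter (· ≤ s) = insert s (Finset.univ.filter (· < s)) := by
        ext t
        simp only [Finset.mem_insert, Finset.mem_filter, Finset.mem_univ, true_and]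
        constructor
        · intro h
          rcases eq_or_lt_of_le h with h | h
          exacts [Or.inl h, Or.inr h]
        · rintro (rfl | h)
          exacts [le_refl _, le_of_lt h]
      have hnot : s ∉ Finset.univ.filter (· < s) := by simp
      have he : e s = φ (MonoidAlgebra.single s 1)
          - ∑ t ∈ Finset.univ.filter (· < s), e t := by
        rw [hφ, hsplit, Finset.sum_insert hnot]
        abel
      rw [he]
      exact sub_mem (LinearMap.mem_range_self _ _)
        (Submodule.sum_mem _ fun t ht => ih t (by simpa using ht))
  have hsurj : Function.Surjective φ := by
    intro y
    suffices h : y ∈ LinearMap.range φ from h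
    induction y using Finsupp.induction_linear with
    | zero => exact zero_mem _
    | add f g hf hg => exact add_mem hf hg
    | single u c =>
      have hsc : (Finsupp.single u c : PT n →₀ ℂ) = (c • e u : PTAlg n) := by
        show _ = c • Finsupp.single u 1
        exact (Finsupp.smul_single_one u c).symm
      rw [hsc]
      exact Submodule.smul_mem _ c (hrange u)
  have hinj : Function.Injective φ := Function.LeftInverse.injective hψφ
  have hφψ : ∀ y : PTAlg n, φ (ψ y) = y := by
    intro y
    obtain ⟨x, rfl⟩ := hsurj y
    rw [hψφ x]
  -- multiplicativity
  have hmul : ∀ a b : MonoidAlgebra ℂ (PT n), φ (a * b) = PTAlg.mulL (φ a) (φ b) := by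
    intro a b
    induction a using MonoidAlgebra.induction_on with
    | of s =>
      induction b using MonoidAlgebra.induction_on with
      | of t =>
        rw [MonoidAlgebra.of_apply, MonoidAlgebra.of_apply,
          MonoidAlgebra.single_mul_single, one_mul, hφ, hφ, hφ, PTAlg.sum_e_mul_sum_e]
        rfl
      | add b1 b2 h1 h2 =>
        rw [mul_add, map_add, h1, h2, map_add φ, map_add (PTAlg.mulL _)]
      | smul c b hb =>
        rw [mul_smul_comm, map_smul, hb, map_smul φ, map_smul (PTAlg.mulL _)]
    | add a1 a2 h1 h2 =>
      rw [add_mul, map_add, h1, h2, map_add φ a1 a2, map_add PTAlg.mulL,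
        LinearMap.add_apply]
    | smul c a ha =>
      rw [smul_mul_assoc, map_smul, ha, map_smul φ, map_smul PTAlg.mulL,
        LinearMap.smul_apply]
  refine ⟨⟨hinj, hsurj⟩, fun a b => hmul a b, ?_, hψφ, hφψ⟩
  rw [MonoidAlgebra.one_def, hφ, PTAlg.sum_e_le_one]
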